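/- Let c = (27/4)^{1/3} and let C > 0, X > 0 be real numbers. For every pair of real numbers (A, B) satisfying 16·|4A³ + 27B²| < CX, either (i) B² < CX/27 and |A|³ < CX/2, or (ii) B ≠ 0 and |A + c·(B²)^{1/3}| < C·X·(B²)^{−2/3}. That is, every point with |Δ_{A,B}| < CX either lies in a box of dimensions comparable to (X^{1/3}, X^{1/2}) or lies within distance CX·B^{−4/3} of the curve 4A³ + 27B² = 0. -/

import Mathlib

/-- Every point `(A, B)` with `|Δ_{A,B}| = 16|4A³+27B²| < CX` either lies in a box
of dimensions comparable to `(X^{1/3}, X^{1/2})`, or lies within horizontal distance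
`CX·B^{-4/3}` of the curve `4A³ + 27B² = 0`, i.e. `A = -c(B²)^{1/3}` with
`c = (27/4)^{1/3}`. -/
theorem small_disc_in_box_or_near_cusp (C X : ℝ) (hC : 0 < C) (hX : 0 < X)
    (A B : ℝ) (h : 16 * |4 * A ^ 3 + 27 * B ^ 2| < C * X) :
    (B ^ 2 < C * X / 27 ∧ |A| ^ 3 < C * X / 2) ∨
      (B ≠ 0 ∧ |A + (27 / 4 : ℝ) ^ ((1 : ℝ) / 3) * (B ^ 2) ^ ((1 : ℝ) / 3)|
        < C * X * (B ^ 2) ^ (-(2 : ℝ) / 3)) := by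
  rcases eq_or_ne B 0 with hB | hB
  · left
    subst hB
    simp only [ne_eq, OfNat.ofNat_ne_zero, not_false_eq_true, zero_pow, mul_zero, add_zero] at h
    rw [abs_mul] at h
    have hA : |A| ^ 3 = |A ^ 3| := (abs_pow A 3).symm
    constructor
    · nlinarith [abs_nonneg (A ^ 3)]
    · rw [hA]
      have : |(4 : ℝ)| = 4 := by norm_num
      nlinarith [abs_nonneg (A ^ 3)]
  · right
    refine ⟨hB, ?_⟩
    set c : ℝ := (27 / 4 : ℝ) ^ ((1 : ℝ) / 3) with hcdef
    set t : ℝ := (B ^ 2) ^ ((1 : ℝ) / 3) with htdef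
    have hB2 : (0 : ℝ) < B ^ 2 := by positivity
    have hcpos : 0 < c := Real.rpow_pos_of_pos (by norm_num) _
    have htpos : 0 < t := Real.rpow_pos_of_pos hB2 _
    have hc3 : c ^ 3 = 27 / 4 := by
      rw [hcdef, ← Real.rpow_natCast (((27:ℝ)/4) ^ ((1:ℝ)/3)) 3, ← Real.rpow_mul (by norm_num)]
      norm_num
    have ht3 : t ^ 3 = B ^ 2 := by
      rw [htdef, ← Real.rpow_natCast ((B^2) ^ ((1:ℝ)/3)) 3, ← Real.rpow_mul (le_of_lt hB2)]
      norm_num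
    have hneg : (B ^ 2) ^ (-(2 : ℝ) / 3) = (t ^ 2)⁻¹ := by
      rw [show (-(2:ℝ)/3) = ((1:ℝ)/3) * (-2) by ring, Real.rpow_mul (le_of_lt hB2), ← htdef,
        show ((-2 : ℝ)) = ((-2 : ℤ) : ℝ) by norm_num, Real.rpow_intCast]
      norm_num [zpow_neg]
    rw [hneg, show C * X * (t ^ 2)⁻¹ = C * X / t ^ 2 by ring,
      lt_div_iff₀ (by positivity : (0:ℝ) < t ^ 2)]
    -- key factorization
    have hc1 : 1 ≤ c := by nlinarith [sq_nonneg (c - 1), sq_nonneg (c + 1)]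
    have key : |A + c * t| * (A ^ 2 - A * (c * t) + (c * t) ^ 2)
        = |4 * A ^ 3 + 27 * B ^ 2| / 4 := by
      have hfac : (A + c * t) * (A ^ 2 - A * (c * t) + (c * t) ^ 2)
          = (4 * A ^ 3 + 27 * B ^ 2) / 4 := by
        have : c ^ 3 * t ^ 3 = 27 / 4 * B ^ 2 := by rw [hc3, ht3]
        nlinarith [this]
      have hquad : 0 ≤ A ^ 2 - A * (c * t) + (c * t) ^ 2 := by
        nlinarith [sq_nonneg (A - c * t / 2), sq_nonneg (c * t)]
      calc |A + c * t| * (A ^ 2 - A * (c * t) + (c * t) ^ 2)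
          = |(A + c * t) * (A ^ 2 - A * (c * t) + (c * t) ^ 2)| := by
            rw [abs_mul, abs_of_nonneg hquad]
        _ = |4 * A ^ 3 + 27 * B ^ 2| / 4 := by rw [hfac, abs_div]; norm_num
    have hquadge : 3 * (c * t) ^ 2 / 4 ≤ A ^ 2 - A * (c * t) + (c * t) ^ 2 := by
      nlinarith [sq_nonneg (A - c * t / 2)]
    have h2 : |A + c * t| * (3 * (c * t) ^ 2 / 4) < C * X / 64 := by
      calc |A + c * t| * (3 * (c * t) ^ 2 / 4)
          ≤ |A + c * t| * (A ^ 2 - A * (c * t) + (c * t) ^ 2) :=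
            mul_le_mul_of_nonneg_left hquadge (abs_nonneg _)
        _ = |4 * A ^ 3 + 27 * B ^ 2| / 4 := key
        _ < C * X / 64 := by linarith
    nlinarith [abs_nonneg (A + c * t), sq_nonneg t, mul_pos htpos htpos,
      mul_nonneg (abs_nonneg (A + c * t)) (mul_pos htpos htpos).le,
      mul_le_mul_of_nonneg_left (one_le_pow₀ hc1 : (1:ℝ) ≤ c ^ 2)
        (mul_nonneg (abs_nonneg (A + c * t)) (sq_nonneg t))]
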